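/- Let U₁,…,Uₙ be open sets in a topological space with code C = C(U) = {σ ⊆ [n] : U_σ ∖ ⋃_{j∉σ} U_j ≠ ∅}, where U_σ = ⋂_{i∈σ} U_i. If there exist σ ⊆ [n] and distinct i, j ∉ σ such that U_σ ≠ ∅, U_σ ∩ U_i ≠ ∅, U_σ ∩ U_j ≠ ∅, U_σ ⊆ U_i ∪ U_j, and U_σ ∩ U_i ∩ U_j = ∅, then U_σ is disconnected. In particular, the U_k cannot all be convex open subsets of ℝ^d. -/
import Mathlib

theorem stmt8 {n d : ℕ} (U : Fin n → Set (Fin d → ℝ)) (hopen : ∀ k, IsOpen (U k))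
    (σ : Finset (Fin n)) (i j : Fin n) (hij : i ≠ j) (hi : i ∉ σ) (hj : j ∉ σ)
    (hne : (⋂ k ∈ σ, U k).Nonempty)
    (hUi : ((⋂ k ∈ σ, U k) ∩ U i).Nonempty)
    (hUj : ((⋂ k ∈ σ, U k) ∩ U j).Nonempty)
    (hcov : (⋂ k ∈ σ, U k) ⊆ U i ∪ U j)
    (hdisj : (⋂ k ∈ σ, U k) ∩ U i ∩ U j = ∅) :
    ¬ IsConnected (⋂ k ∈ σ, U k) ∧ ¬ (∀ k, Convex ℝ (U k)) := by
  have hnc : ¬ IsConnected (⋂ k ∈ σ, U k) := by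
    intro h
    obtain ⟨x, hx⟩ := h.2 (U i) (U j) (hopen i) (hopen j) hcov hUi hUj
    have : x ∈ (⋂ k ∈ σ, U k) ∩ U i ∩ U j := ⟨⟨hx.1, hx.2.1⟩, hx.2.2⟩
    rw [hdisj] at this
    exact this
  refine ⟨hnc, fun hconv => hnc ?_⟩
  have hcvx : Convex ℝ (⋂ k ∈ σ, U k) := convex_iInter₂ fun k _ => hconv k
  exact hcvx.isConnected hne
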